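/- Let (A, ⟨·,·⟩) be a finite-dimensional metric Jordan algebra with Jordan-Levi-Civita connection ∇, and let R(X,Y)Z = ∇_{XY}Z − ∇_X∇_Y Z − ∇_Y∇_X Z. Then ⟨R(X,Y)Z, W⟩ = ⟨R(X,Y)W, Z⟩ for all X, Y, Z, W in A. -/
import Mathlib


open RealInnerProductSpace

/-- The Jordan curvature tensor of a metric Jordan algebra is
symmetric in its last two slots: ⟨R(X,Y)Z, W⟩ = ⟨R(X,Y)W, Z⟩. -/
theorem jordan_curvature_symm_last_two
    {V : Type*} [NormedAddCommGroup V] [InnerProductSpace ℝ V] [FiniteDimensional ℝ V]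
    (mul : V →ₗ[ℝ] V →ₗ[ℝ] V)
    (comm : ∀ X Y : V, mul X Y = mul Y X)
    (jordan : ∀ X Y : V, mul X (mul (mul X X) Y) = mul (mul X X) (mul X Y))
    (D : V →ₗ[ℝ] V →ₗ[ℝ] V)
    (hD₁ : ∀ X Y : V, D X Y + D Y X = mul X Y)
    (hD₂ : ∀ X Y Z : V, ⟪D X Y, Z⟫ = ⟪Y, D X Z⟫)
    (R : V → V → V → V)
    (hR : ∀ X Y Z : V, R X Y Z = D (mul X Y) Z - D X (D Y Z) - D Y (D X Z)) :
    ∀ X Y Z W : V, ⟪R X Y Z, W⟫ = ⟪R X Y W, Z⟫ := by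
  intro X Y Z W
  have h1 : ⟪D (mul X Y) Z, W⟫ = ⟪D (mul X Y) W, Z⟫ := by
    rw [hD₂, real_inner_comm]
  have h2 : ⟪D X (D Y Z), W⟫ = ⟪D Y (D X W), Z⟫ := by
    rw [hD₂ X, hD₂ Y, real_inner_comm]
  have h3 : ⟪D Y (D X Z), W⟫ = ⟪D X (D Y W), Z⟫ := by
    rw [hD₂ Y, hD₂ X, real_inner_comm]
  simp only [hR, inner_sub_left, h1, h2, h3]
  ring
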